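/- Let h : ℝ^d → ℝ ∪ {+∞} be a Legendre function and ψ : ℝ^d → ℝ a convex function. Define the generalized Bregman divergence D̃_{h+ψ}(x, y) = (h+ψ)(x) − (h+ψ)(∇(h+ψ)*(y)) − ⟨y, x − ∇(h+ψ)*(y)⟩ for x ∈ dom h, y ∈ int dom (h+ψ)*. Then D̃_{h+ψ}(x, y) ≥ D_h(x, ∇(h+ψ)*(y)), where D_h(x, w) = h(x) − h(w) − ⟨∇h(w), x − w⟩ is the ordinary Bregman divergence. -/

import Mathlib

open scoped RealInnerProductSpace

/-- Generalized Bregman divergence inequality: if `h` is convex and differentiable,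
`ψ` is convex, and `p` is the point `∇(h+ψ)*(y)`, i.e. the maximizer of
`⟨y, ·⟩ − (h + ψ)(·)`, then
`D̃_{h+ψ}(x, y) = (h+ψ)(x) − (h+ψ)(p) − ⟨y, x − p⟩` dominates the ordinary Bregman
divergence `D_h(x, p) = h(x) − h(p) − ⟨∇h(p), x − p⟩`. -/
theorem stmt_14 {d : ℕ} (h ψ : EuclideanSpace ℝ (Fin d) → ℝ)
    (hh : ConvexOn ℝ Set.univ h) (hψ : ConvexOn ℝ Set.univ ψ)
    (hdiff : Differentiable ℝ h)
    (y p : EuclideanSpace ℝ (Fin d))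
    (hp : ∀ z : EuclideanSpace ℝ (Fin d),
      ⟪y, z⟫ - (h z + ψ z) ≤ ⟪y, p⟫ - (h p + ψ p))
    (x : EuclideanSpace ℝ (Fin d)) :
    h x - h p - ⟪gradient h p, x - p⟫ ≤
      (h x + ψ x) - (h p + ψ p) - ⟪y, x - p⟫ := by
  set v := x - p with hv
  -- the function along the segment
  set f : ℝ → ℝ := fun t => h (p + t • v) with hf
  have hf0 : f 0 = h p := by simp [hf]
  -- derivative of f at 0 is ⟪gradient h p, v⟫
  have hderiv : HasDerivAt f ⟪gradient h p, v⟫ 0 := by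
    have h1 : HasFDerivAt h (InnerProductSpace.toDual ℝ _ (gradient h p)) p :=
      (hdiff p).hasGradientAt.hasFDerivAt
    have h2 : HasDerivAt (fun t : ℝ => p + t • v) v 0 := by
      simpa using ((hasDerivAt_id (0:ℝ)).smul_const v).const_add p
    have h1' : HasFDerivAt h (InnerProductSpace.toDual ℝ _ (gradient h p)) (p + (0:ℝ) • v) := by
      simpa using h1
    have := h1'.comp_hasDerivAt (x := (0:ℝ)) h2
    rw [InnerProductSpace.toDual_apply_apply] at this
    exact this
  -- key inequality for slopes
  have key : ∀ t ∈ Set.Ioc (0:ℝ) 1, ⟪y, v⟫ - (ψ x - ψ p) ≤ slope f 0 t := by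
    intro t ht
    have ht0 : 0 < t := ht.1
    have hz : p + t • v = (1 - t) • p + t • x := by
      rw [hv]; module
    have hconv : ψ (p + t • v) ≤ (1 - t) * ψ p + t * ψ x := by
      rw [hz]
      exact hψ.2 (Set.mem_univ p) (Set.mem_univ x) (by linarith [ht.2]) ht0.le (by ring)
    have hmax := hp (p + t • v)
    rw [inner_add_right, inner_smul_right] at hmax
    have hslope : slope f 0 t = (f t - h p) / t := by
      rw [slope_def_field, hf0]; ring
    rw [hslope, le_div_iff₀ ht0]
    have : f t = h (p + t • v) := rfl
    nlinarith [hmax, hconv]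
  -- take the limit t → 0⁺
  have htend : Filter.Tendsto (slope f 0) (nhdsWithin 0 (Set.Ioi 0)) (nhds ⟪gradient h p, v⟫) := by
    have := (hderiv.hasDerivWithinAt (s := Set.Ioi 0))
    rw [hasDerivWithinAt_iff_tendsto_slope] at this
    have hset : Set.Ioi (0:ℝ) \ {0} = Set.Ioi 0 := by
      ext t
      constructor
      · exact fun ht => ht.1
      · exact fun ht => ⟨ht, ne_of_gt ht⟩
    rwa [hset] at this
  have hmem : Set.Ioc (0:ℝ) 1 ∈ nhdsWithin (0:ℝ) (Set.Ioi 0) :=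
    Ioc_mem_nhdsGT_of_mem (by norm_num : (0:ℝ) ∈ Set.Ico (0:ℝ) 1)
  have hle : ⟪y, v⟫ - (ψ x - ψ p) ≤ ⟪gradient h p, v⟫ :=
    ge_of_tendsto htend (Filter.eventually_iff_exists_mem.2 ⟨_, hmem, key⟩)
  linarith
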